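/- Let p ∈ ω* and 𝒯(p) the topology on ω* whose closed sets are the X with X = X^p. Then the 𝒯(p)-closure of every 𝒯(p)-open set is 𝒯(p)-open; that is, (ω*, 𝒯(p)) is extremally disconnected. -/

import Mathlib

/-- The Stone–Čech remainder `ω* = β(ω) \ ω`. -/
def omegaStar : Set (StoneCech ℕ) := (Set.range (stoneCechUnit : ℕ → StoneCech ℕ))ᶜ

/-- The Stone extension `f̄ : β(ω) → β(ω)` of a map `f : ω → β(ω)`. -/
noncomputable def stoneExt (f : ℕ → StoneCech ℕ) : StoneCech ℕ → StoneCech ℕ :=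
  stoneCechExtend (continuous_of_discreteTopology (f := f))

/-- `pOp p X = X^p`: the set `X` together with all its `p`-limits `f̄(p)` through countable
discrete subsets `f[ω] ⊆ X` (with `f : ω ≈ f[ω]`, i.e. `f` injective with discrete range). -/
def pOp (p : StoneCech ℕ) (X : Set (StoneCech ℕ)) : Set (StoneCech ℕ) :=
  X ∪ {y | ∃ f : ℕ → StoneCech ℕ, Function.Injective f ∧ Set.range f ⊆ X ∧
    DiscreteTopology (Set.range f) ∧ stoneExt f p = y}

/-- `X` is `𝒯(p)`-open: `X ⊆ ω*` and its complement in `ω*` is `𝒯(p)`-closed,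
i.e. fixed by the operator `X ↦ X^p`. -/
def TpOpen (p : StoneCech ℕ) (X : Set (StoneCech ℕ)) : Prop :=
  X ⊆ omegaStar ∧ pOp p (omegaStar \ X) = omegaStar \ X

/-- The `𝒯(p)`-closure of `X ⊆ ω*`: the smallest superset of `X` which is `𝒯(p)`-closed. -/
def TpClosure (p : StoneCech ℕ) (X : Set (StoneCech ℕ)) : Set (StoneCech ℕ) :=
  ⋂₀ {C | X ⊆ C ∧ C ⊆ omegaStar ∧ pOp p C = C}


section TpAuxSection
open Set Function

namespace TpAux

/-- `hatS A` : the closure of the copy of `A ⊆ ℕ` in `βℕ`. -/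
def hatS (A : Set ℕ) : Set (StoneCech ℕ) := closure (stoneCechUnit '' A)

/-- membership of `A` in the "ultrafilter" of the point `x`. -/
def Uf (x : StoneCech ℕ) (A : Set ℕ) : Prop := x ∈ hatS A

lemma isClosed_hatS (A : Set ℕ) : IsClosed (hatS A) := isClosed_closure

lemma unit_mem_hatS {n : ℕ} {A : Set ℕ} (h : n ∈ A) : stoneCechUnit n ∈ hatS A :=
  subset_closure ⟨n, h, rfl⟩

/-- Bool-extension separation: disjoint subsets of `ℕ` have disjoint hats. -/
lemma hatS_disj {A B : Set ℕ} (h : A ∩ B = ∅) {x : StoneCech ℕ}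
    (hA : Uf x A) (hB : Uf x B) : False := by
  classical
  set χ : ℕ → Bool := fun n => decide (n ∈ A) with hχ
  have hc : Continuous χ := continuous_of_discreteTopology
  set E := stoneCechExtend hc with hE
  have hEc : Continuous E := continuous_stoneCechExtend hc
  have h1 : hatS A ⊆ E ⁻¹' {true} := by
    apply closure_minimal
    · rintro _ ⟨n, hn, rfl⟩
      have : E (stoneCechUnit n) = χ n := congrFun (stoneCechExtend_extends hc) n
      simp [this, hχ, hn]
    · exact (isClosed_discrete _).preimage hEc
  have h2 : hatS B ⊆ E ⁻¹' {false} := by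
    apply closure_minimal
    · rintro _ ⟨n, hn, rfl⟩
      have hnA : n ∉ A := fun hnA => by
        have : n ∈ A ∩ B := ⟨hnA, hn⟩
        rw [h] at this; exact this
      have : E (stoneCechUnit n) = χ n := congrFun (stoneCechExtend_extends hc) n
      simp [this, hχ, hnA]
    · exact (isClosed_discrete _).preimage hEc
  have := h1 hA
  have := h2 hB
  simp_all

lemma Uf.mono {x : StoneCech ℕ} {A B : Set ℕ} (h : A ⊆ B) (hA : Uf x A) : Uf x B :=
  closure_mono (image_mono h) hA

lemma hatS_union (A B : Set ℕ) : hatS (A ∪ B) = hatS A ∪ hatS B := by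
  unfold hatS; rw [image_union, closure_union]

lemma Uf.union {x : StoneCech ℕ} {A B : Set ℕ} (h : Uf x (A ∪ B)) : Uf x A ∨ Uf x B := by
  have := h; unfold Uf at this ⊢; rw [hatS_union] at this; exact this

lemma Uf_univ {x : StoneCech ℕ} : Uf x univ := by
  unfold Uf hatS
  rw [image_univ, (denseRange_stoneCechUnit).closure_range]
  trivial

lemma Uf.total (x : StoneCech ℕ) (A : Set ℕ) : Uf x A ∨ Uf x Aᶜ := by
  have : Uf x (A ∪ Aᶜ) := by rw [union_compl_self]; exact Uf_univ
  exact this.union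

lemma Uf.compl_not {x : StoneCech ℕ} {A : Set ℕ} (h : Uf x A) : ¬ Uf x Aᶜ :=
  fun h' => hatS_disj (inter_compl_self A) h h'

lemma Uf.of_not_compl {x : StoneCech ℕ} {A : Set ℕ} (h : ¬ Uf x Aᶜ) : Uf x A :=
  (Uf.total x A).resolve_right h

lemma Uf.inter {x : StoneCech ℕ} {A B : Set ℕ} (hA : Uf x A) (hB : Uf x B) :
    Uf x (A ∩ B) := by
  have h1 : Uf x ((A ∩ B) ∪ (A \ B)) := by
    apply hA.mono; intro n hn
    by_cases hb : n ∈ B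
    · exact Or.inl ⟨hn, hb⟩
    · exact Or.inr ⟨hn, hb⟩
  rcases h1.union with h | h
  · exact h
  · exact absurd (h.mono (fun n hn => hn.2)) hB.compl_not

/-- An open set is contained in the hat of its trace on `ℕ`. -/
lemma open_subset_hatS {U : Set (StoneCech ℕ)} (hU : IsOpen U) :
    U ⊆ hatS {n | stoneCechUnit n ∈ U} := by
  intro x hx
  have hd : Dense (range (stoneCechUnit : ℕ → StoneCech ℕ)) := denseRange_stoneCechUnit
  have := hd.open_subset_closure_inter hU hx
  refine closure_mono ?_ this
  rintro z ⟨hzU, n, rfl⟩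
  exact ⟨n, hzU, rfl⟩

/-- Points of `βℕ` are separated by hats. -/
lemma exists_hat_sep {x y : StoneCech ℕ} (h : x ≠ y) :
    ∃ A : Set ℕ, Uf x A ∧ ¬ Uf y A := by
  obtain ⟨U, V, hU, hV, hxU, hyV, hUV⟩ := t2_separation h
  refine ⟨{n | stoneCechUnit n ∈ U}, open_subset_hatS hU hxU, fun hy => ?_⟩
  have hyA : Uf y {n | stoneCechUnit n ∈ V} := open_subset_hatS hV hyV
  apply hatS_disj _ hy hyA
  ext n; simp only [mem_inter_iff, mem_setOf_eq, mem_empty_iff_false, iff_false, not_and]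
  intro h1 h2
  exact (Set.disjoint_iff.mp hUV) ⟨h1, h2⟩

lemma eq_of_Uf_le {x y : StoneCech ℕ} (h : ∀ A, Uf x A → Uf y A) : y = x := by
  by_contra hne
  obtain ⟨A, hyA, hxA⟩ := exists_hat_sep hne
  exact hyA.compl_not (h _ (Uf.of_not_compl (by simpa using hxA)))

lemma stoneExt_unit (f : ℕ → StoneCech ℕ) (n : ℕ) : stoneExt f (stoneCechUnit n) = f n :=
  congrFun (stoneCechExtend_extends _) n

/-- h7 : limit lemma. -/
lemma Uf.limit {p : StoneCech ℕ} {f : ℕ → StoneCech ℕ} {M : Set ℕ} {A : Set ℕ}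
    (hM : Uf p M) (h : ∀ m ∈ M, Uf (f m) A) : Uf (stoneExt f p) A := by
  have hc : Continuous (stoneExt f) := continuous_stoneCechExtend _
  have h1 : stoneExt f '' (hatS M) ⊆ hatS A := by
    have : stoneExt f '' closure (stoneCechUnit '' M) ⊆ closure (stoneExt f '' (stoneCechUnit '' M)) :=
      image_closure_subset_closure_image hc
    refine subset_trans this ?_
    apply closure_minimal ?_ (isClosed_hatS A)
    rintro _ ⟨_, ⟨m, hm, rfl⟩, rfl⟩
    rw [stoneExt_unit]
    exact h m hm
  exact h1 ⟨p, hM, rfl⟩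

/-- h7' : converse of the limit lemma. -/
lemma Uf.of_limit {p : StoneCech ℕ} {f : ℕ → StoneCech ℕ} {A : Set ℕ}
    (h : Uf (stoneExt f p) A) : Uf p {m | Uf (f m) A} := by
  apply Uf.of_not_compl
  intro hc
  have : Uf (stoneExt f p) Aᶜ := Uf.limit hc (fun m hm => Uf.of_not_compl (by simpa using hm))
  exact h.compl_not this

lemma unit_Uf_iff {n : ℕ} {A : Set ℕ} : Uf (stoneCechUnit n) A ↔ n ∈ A := by
  constructor
  · intro h
    by_contra hn
    exact hatS_disj (A := {n}) (B := A) (by ext m; simp; rintro rfl; exact hn) (unit_mem_hatS (rfl : n ∈ ({n} : Set ℕ))) h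
  · exact fun h => unit_mem_hatS h

/-- p-limits of sequences into `ω*` avoid the copy of `ℕ`. -/
lemma stoneExt_notUnit {p : StoneCech ℕ} {f : ℕ → StoneCech ℕ}
    (hf : ∀ m, f m ∉ range (stoneCechUnit : ℕ → StoneCech ℕ)) (n : ℕ) :
    stoneExt f p ≠ stoneCechUnit n := by
  intro h
  have h1 : Uf (stoneExt f p) {n} := by rw [h]; exact unit_mem_hatS rfl
  have h2 := h1.of_limit
  have h3 : {m | Uf (f m) {n}} = ∅ := by
    ext m; simp only [mem_setOf_eq, mem_empty_iff_false, iff_false]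
    intro hm
    -- hatS {n} = {stoneCechUnit n}
    have : hatS {n} = {stoneCechUnit n} := by
      unfold hatS
      rw [image_singleton]
      exact closure_singleton
    rw [Uf, this] at hm
    exact hf m ⟨n, hm.symm⟩
  rw [h3] at h2
  have : hatS (∅ : Set ℕ) = ∅ := by unfold hatS; rw [image_empty, closure_empty]
  rw [Uf, this] at h2
  exact h2

lemma not_Uf_of_unit_range {x : StoneCech ℕ} (hx : x ∉ range (stoneCechUnit : ℕ → StoneCech ℕ))
    {F : Set ℕ} (hF : F.Finite) : ¬ Uf x F := by
  intro h
  have : hatS F = stoneCechUnit '' F := by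
    unfold hatS
    exact IsClosed.closure_eq ((hF.image _).isClosed)
  rw [Uf, this] at h
  obtain ⟨n, _, rfl⟩ := h
  exact hx ⟨n, rfl⟩

lemma isOpen_hatS (A : Set ℕ) : IsOpen (hatS A) := by
  have h1 : hatS A = (hatS Aᶜ)ᶜ := by
    apply Subset.antisymm
    · intro x hx
      exact fun hc => hatS_disj (inter_compl_self A) hx hc
    · intro x hx
      exact Uf.of_not_compl hx
  rw [h1]
  exact (isClosed_hatS Aᶜ).isOpen_compl

instance : TotallySeparatedSpace (StoneCech ℕ) := by
  constructor
  intro x _ y _ hxy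
  obtain ⟨A, hx, hy⟩ := exists_hat_sep hxy
  exact ⟨hatS A, hatS Aᶜ, isOpen_hatS A, isOpen_hatS Aᶜ, hx, Uf.of_not_compl (by simpa using hy),
    by intro z _; rcases Uf.total z A with h | h; exacts [Or.inl h, Or.inr h],
    by rw [Set.disjoint_iff]; rintro z ⟨h1, h2⟩; exact hatS_disj (inter_compl_self A) h1 h2⟩

/-- every point of an open set has a hat neighborhood inside it. -/
lemma exists_hatS_sub {x : StoneCech ℕ} {U : Set (StoneCech ℕ)} (hU : IsOpen U) (hx : x ∈ U) :
    ∃ A : Set ℕ, Uf x A ∧ hatS A ⊆ U := by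
  obtain ⟨V, hV, hxV, hVU⟩ := compact_exists_isClopen_in_isOpen hU hx
  refine ⟨{n | stoneCechUnit n ∈ V}, open_subset_hatS hV.2 hxV, ?_⟩
  refine subset_trans ?_ hVU
  apply closure_minimal ?_ hV.1
  rintro _ ⟨n, hn, rfl⟩
  exact hn

lemma not_Uf_finUnion {x : StoneCech ℕ} {F : ℕ → Set ℕ} :
    ∀ {k : ℕ}, (∀ j < k, ¬ Uf x (F j)) → ¬ Uf x (⋃ j ∈ Finset.range k, F j) := by
  intro k
  induction k with
  | zero =>
    intro _ h
    simpa using (by simpa using h : Uf x ∅).compl_not (by simpa using (Uf_univ : Uf x univ))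
  | succ k ih =>
    intro h hU
    have : (⋃ j ∈ Finset.range (k+1), F j) = (⋃ j ∈ Finset.range k, F j) ∪ F k := by
      ext n
      simp only [Finset.mem_range, mem_iUnion, mem_union]
      constructor
      · rintro ⟨j, hj, hn⟩
        rcases Nat.lt_succ_iff_lt_or_eq.mp hj with h' | rfl
        · exact Or.inl ⟨j, h', hn⟩
        · exact Or.inr hn
      · rintro (⟨j, hj, hn⟩ | hn)
        · exact ⟨j, Nat.lt_succ_of_lt hj, hn⟩
        · exact ⟨k, Nat.lt_succ_self k, hn⟩
    rw [this] at hU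
    rcases hU.union with h' | h'
    · exact ih (fun j hj => h j (Nat.lt_succ_of_lt hj)) h'
    · exact h k (Nat.lt_succ_self k) h'

/-- a countable discrete injective family in `βℕ` has pairwise disjoint hat neighborhoods. -/
lemma exists_disjoint_hats (x : ℕ → StoneCech ℕ) (hinj : Injective x)
    (hd : DiscreteTopology (Set.range x)) :
    ∃ C : ℕ → Set ℕ, (∀ k j, k ≠ j → C k ∩ C j = ∅) ∧ ∀ k, Uf (x k) (C k) := by
  classical
  have hA : ∀ k : ℕ, ∃ A : Set ℕ, Uf (x k) A ∧ ∀ j, j ≠ k → ¬ Uf (x j) A := by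
    intro k
    have hopen : IsOpen ({⟨x k, ⟨k, rfl⟩⟩} : Set (Set.range x)) := isOpen_discrete _
    rw [isOpen_induced_iff] at hopen
    obtain ⟨t, ht, hpre⟩ := hopen
    have hxk : x k ∈ t := by
      have : (⟨x k, ⟨k, rfl⟩⟩ : Set.range x) ∈ (Subtype.val ⁻¹' t) := by rw [hpre]; rfl
      exact this
    obtain ⟨A, hUf, hsub⟩ := exists_hatS_sub ht hxk
    refine ⟨A, hUf, fun j hj h => ?_⟩
    have hxj : x j ∈ t := hsub h
    have : (⟨x j, ⟨j, rfl⟩⟩ : Set.range x) ∈ (Subtype.val ⁻¹' t) := hxj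
    rw [hpre] at this
    have : x j = x k := congrArg Subtype.val this
    exact hj (hinj this)
  choose A hA1 hA2 using hA
  refine ⟨fun k => A k ∩ (⋃ j ∈ Finset.range k, A j)ᶜ, ?_, ?_⟩
  · intro k j hkj
    rcases Nat.lt_or_ge k j with h | h
    · ext n
      simp only [mem_inter_iff, mem_compl_iff, mem_iUnion, Finset.mem_range,
        mem_empty_iff_false, iff_false, not_and, and_imp]
      intro hnAk _ _ hn
      exact hn ⟨k, h, hnAk⟩
    · have hlt : j < k := lt_of_le_of_ne h (Ne.symm hkj)
      ext n
      simp only [mem_inter_iff, mem_compl_iff, mem_iUnion, Finset.mem_range,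
        mem_empty_iff_false, iff_false, not_and, and_imp]
      intro _ hn hnAj _
      exact hn ⟨j, hlt, hnAj⟩
  · intro k
    refine (hA1 k).inter (Uf.of_not_compl ?_)
    simp only [compl_compl]
    exact not_Uf_finUnion (fun j hj => hA2 j k (by omega))

/-- Frolík-style diagonal lemma: `p` is not a `p`-limit of a "discretely supported"
family of points each living strictly above its index. -/
lemma D_lemma {p : StoneCech ℕ} {G : Set ℕ} (hG : Uf p G)
    (ζ : ℕ → StoneCech ℕ) (A : ℕ → Set ℕ)
    (hdisj : ∀ k ∈ G, ∀ j ∈ G, k ≠ j → A k ∩ A j = ∅)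
    (hA : ∀ k ∈ G, Uf (ζ k) (A k))
    (hreg : ∀ k ∈ G, ∀ j ∈ A k, k < j)
    (hfix : stoneExt ζ p = p) : False := by
  classical
  set R : Set ℕ := {j | ∃ k ∈ G, j ∈ A k} with hRdef
  set τ : ℕ → ℕ := fun j => if h : ∃ k ∈ G, j ∈ A k then h.choose else j with hτdef
  have hτspec : ∀ j k, k ∈ G → j ∈ A k → τ j = k := by
    intro j k hk hj
    have hex : ∃ k ∈ G, j ∈ A k := ⟨k, hk, hj⟩
    have h1 := hex.choose_spec
    have : τ j = hex.choose := by simp only [hτdef, dif_pos hex]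
    rw [this]
    by_contra hne
    have := hdisj _ h1.1 _ hk hne
    have : j ∈ A hex.choose ∩ A k := ⟨h1.2, hj⟩
    rw [hdisj _ h1.1 _ hk hne] at this
    exact this
  have hτlt : ∀ j ∈ R, τ j < j := by
    rintro j ⟨k, hk, hj⟩
    rw [hτspec j k hk hj]
    exact hreg k hk j hj
  have hdex : ∀ j, ∃ i, τ^[i] j ∉ R := by
    intro j
    induction j using Nat.strong_induction_on with
    | _ j ih =>
      by_cases hj : j ∈ R
      · obtain ⟨i, hi⟩ := ih (τ j) (hτlt j hj)
        exact ⟨i + 1, by rwa [Function.iterate_succ_apply]⟩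
      · exact ⟨0, hj⟩
  set d : ℕ → ℕ := fun j => Nat.find (hdex j) with hddef
  have hdsucc : ∀ j ∈ R, d j = d (τ j) + 1 := by
    intro j hj
    have hn := Nat.find_spec (hdex (τ j))
    apply Nat.find_eq_iff (hdex j) |>.mpr
    constructor
    · rwa [Function.iterate_succ_apply]
    · intro m hm
      simp only [not_not]
      match m with
      | 0 => exact hj
      | m + 1 =>
        rw [Function.iterate_succ_apply]
        have hmlt : m < d (τ j) := by omega
        have := Nat.find_min (hdex (τ j)) (by simpa [hddef] using hmlt)
        simpa using this
  have hR : ∀ B : Set ℕ, Uf p B → Uf p {j | ∃ k ∈ B ∩ G, j ∈ A k} := by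
    intro B hB
    have h1 : Uf p (B ∩ G) := hB.inter hG
    have h2 : Uf (stoneExt ζ p) {j | ∃ k ∈ B ∩ G, j ∈ A k} := by
      apply Uf.limit h1
      intro k hk
      exact (hA k hk.2).mono (fun j hj => ⟨k, hk, hj⟩)
    rwa [hfix] at h2
  have hUfR : Uf p R := by
    have := hR univ Uf_univ
    apply this.mono
    rintro j ⟨k, hk, hj⟩
    exact ⟨k, hk.2, hj⟩
  set S : ℕ → Set ℕ := fun b => {j | j ∈ R ∧ d j % 2 = b} with hSdef
  have hScover : Uf p (S 0) ∨ Uf p (S 1) := by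
    apply Uf.union
    apply hUfR.mono
    intro j hj
    rcases Nat.mod_two_eq_zero_or_one (d j) with h | h
    · exact Or.inl ⟨hj, h⟩
    · exact Or.inr ⟨hj, h⟩
  have key : ∀ b, Uf p (S b) → False := by
    intro b hSb
    have h1 : Uf p {j | ∃ k ∈ S b ∩ G, j ∈ A k} := hR _ hSb
    apply hatS_disj _ hSb h1
    ext j
    simp only [mem_inter_iff, mem_setOf_eq, mem_empty_iff_false, iff_false, not_and]
    rintro ⟨hjR, hjd⟩ ⟨k, ⟨hkS, hkG⟩, hjA⟩
    have hτ : τ j = k := hτspec j k hkG hjA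
    have hjR' : j ∈ R := ⟨k, hkG, hjA⟩
    have := hdsucc j hjR'
    rw [hτ] at this
    have hkd : d k % 2 = b := hkS.2
    omega
  rcases hScover with h | h
  · exact key 0 h
  · exact key 1 h

lemma Uf.compl_of_not {x : StoneCech ℕ} {A : Set ℕ} (h : ¬ Uf x A) : Uf x Aᶜ :=
  (Uf.total x A).resolve_left h

lemma not_Uf_empty {x : StoneCech ℕ} : ¬ Uf x (∅ : Set ℕ) := by
  intro h
  have : hatS (∅ : Set ℕ) = ∅ := by unfold hatS; rw [image_empty, closure_empty]
  rw [Uf, this] at h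
  exact h

/-- The "concentrated" case of Frolík's uniqueness argument. -/
lemma conc_case {p : StoneCech ℕ} (x y : ℕ → StoneCech ℕ) (C B : ℕ → Set ℕ)
    (hCd : ∀ k j, k ≠ j → C k ∩ C j = ∅)
    (hBd : ∀ n m, n ≠ m → B n ∩ B m = ∅)
    (hCx : ∀ k, Uf (x k) (C k))
    (hBy : ∀ n, Uf (y n) (B n))
    (hxy : ∀ k n, x k ≠ y n)
    (hq : stoneExt x p = stoneExt y p)
    (hconc : Uf p {n | ∃ k, Uf (y n) (C k)}) : False := by
  classical
  set N₁ : Set ℕ := {n | ∃ k, Uf (y n) (C k)} with hN₁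
  set κ : ℕ → ℕ := fun n => if h : ∃ k, Uf (y n) (C k) then h.choose else 0 with hκdef
  have hκ : ∀ n ∈ N₁, Uf (y n) (C (κ n)) := by
    intro n hn
    have hex : ∃ k, Uf (y n) (C k) := hn
    have : κ n = hex.choose := by simp only [hκdef]; rw [dif_pos hex]
    rw [this]
    exact hex.choose_spec
  have hWex : ∀ n : ℕ, ∃ A : Set ℕ, Uf (y n) A ∧ ¬ Uf (x (κ n)) A :=
    fun n => exists_hat_sep (hxy (κ n) n).symm
  set W : ℕ → Set ℕ := fun n => (hWex n).choose with hWdef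
  have hWy : ∀ n, Uf (y n) (W n) := fun n => (hWex n).choose_spec.1
  have hWx : ∀ n, ¬ Uf (x (κ n)) (W n) := fun n => (hWex n).choose_spec.2
  set B' : ℕ → Set ℕ := fun n => if n ∈ N₁ then B n ∩ C (κ n) ∩ W n else ∅ with hB'def
  have hB'y : ∀ n ∈ N₁, Uf (y n) (B' n) := by
    intro n hn
    simp only [hB'def, if_pos hn]
    exact ((hBy n).inter (hκ n hn)).inter (hWy n)
  have hB'B : ∀ n, B' n ⊆ B n := by
    intro n j hj
    simp only [hB'def] at hj
    split at hj
    · exact hj.1.1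
    · exact absurd hj (fun h => h)
  have hB'C : ∀ n ∈ N₁, B' n ⊆ C (κ n) := by
    intro n hn j hj
    simp only [hB'def, if_pos hn] at hj
    exact hj.1.2
  have hB'W : ∀ n ∈ N₁, B' n ⊆ W n := by
    intro n hn j hj
    simp only [hB'def, if_pos hn] at hj
    exact hj.2
  -- index map of the refined hats
  set β' : ℕ → ℕ := fun j => if h : ∃ n ∈ N₁, j ∈ B' n then h.choose else 0 with hβ'def
  have hβ'spec : ∀ j n, n ∈ N₁ → j ∈ B' n → β' j = n := by
    intro j n hn hj
    have hex : ∃ n ∈ N₁, j ∈ B' n := ⟨n, hn, hj⟩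
    have h1 := hex.choose_spec
    have h2 : β' j = hex.choose := by simp only [hβ'def, dif_pos hex]
    rw [h2]
    by_contra hne
    have : j ∈ B hex.choose ∩ B n := ⟨hB'B _ h1.2, hB'B _ hj⟩
    rw [hBd _ _ hne] at this
    exact this
  -- the S sets
  have hS : ∀ A : Set ℕ, Uf p A → Uf (stoneExt x p) {j | ∃ n ∈ A ∩ N₁, j ∈ B' n} := by
    intro A hA
    rw [hq]
    apply Uf.limit (hA.inter hconc)
    intro n hn
    exact (hB'y n hn.2).mono (fun j hj => ⟨n, hn, hj⟩)
  have hSsub : ∀ A : Set ℕ, {j | ∃ n ∈ A ∩ N₁, j ∈ B' n} ⊆ β' ⁻¹' A := by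
    rintro A j ⟨n, hn, hj⟩
    have := hβ'spec j n hn.2 hj
    simp only [mem_preimage, this]
    exact hn.1
  -- the trace points
  set ζ : ℕ → StoneCech ℕ := fun k => stoneExt (fun j => stoneCechUnit (β' j)) (x k) with hζdef
  have hζtrans : ∀ k (A : Set ℕ), Uf (x k) (β' ⁻¹' A) → Uf (ζ k) A := by
    intro k A h
    apply Uf.limit h
    intro j hj
    exact unit_Uf_iff.mpr hj
  have hfix : stoneExt ζ p = p := by
    apply eq_of_Uf_le
    intro A hA
    have h1 := (hS A hA).of_limit
    apply Uf.limit (h1.mono (fun k hk => ?_)) (fun k hk => hk)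
    exact hζtrans k A (hk.mono (hSsub A))
  -- the index sets for the diagonal lemma
  set G : Set ℕ := {k | Uf (x k) {j | ∃ n ∈ (univ : Set ℕ) ∩ N₁, j ∈ B' n}} with hGdef
  have hG : Uf p G := (hS univ Uf_univ).of_limit
  set AD : ℕ → Set ℕ := fun k => {n | n ∈ N₁ ∧ κ n = k ∧ k < n} with hADdef
  have hB'notx : ∀ k n, ¬ Uf (x k) (B' n) := by
    intro k n h
    by_cases hn : n ∈ N₁
    · by_cases hκk : κ n = k
      · exact hWx n (by rw [hκk]; exact h.mono (hB'W n hn))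
      · have h1 : Uf (x k) (C (κ n)) := h.mono (hB'C n hn)
        exact hatS_disj (hCd _ _ (fun hh => hκk hh.symm)) (hCx k) h1
    · rw [hB'def] at h
      simp only [if_neg hn] at h
      exact not_Uf_empty h
  have hA : ∀ k ∈ G, Uf (ζ k) (AD k) := by
    intro k hk
    apply hζtrans
    have h1 : Uf (x k) ({j | ∃ n ∈ (univ : Set ℕ) ∩ N₁, j ∈ B' n} ∩ C k) := hk.inter (hCx k)
    have h2 : ¬ Uf (x k) (⋃ n ∈ Finset.range (k+1), B' n) :=
      not_Uf_finUnion (fun n _ => hB'notx k n)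
    have h3 := h1.inter (Uf.compl_of_not h2)
    apply h3.mono
    rintro j ⟨⟨⟨n, hn, hj⟩, hjC⟩, hjbad⟩
    have hβ : β' j = n := hβ'spec j n hn.2 hj
    have hκn : κ n = k := by
      by_contra hne
      have : j ∈ C (κ n) ∩ C k := ⟨hB'C n hn.2 hj, hjC⟩
      rw [hCd _ _ hne] at this
      exact this
    have hkn : k < n := by
      by_contra hle
      apply hjbad
      simp only [mem_iUnion, Finset.mem_range]
      exact ⟨n, by omega, hj⟩
    simp only [mem_preimage, hβ, hADdef]
    exact ⟨hn.2, hκn, hkn⟩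
  refine D_lemma hG ζ AD ?_ hA ?_ hfix
  · intro k _ j _ hkj
    ext n
    simp only [mem_inter_iff, mem_empty_iff_false, iff_false]
    rintro ⟨h1, h2⟩
    exact hkj ((h1.2.1).symm.trans h2.2.1)
  · intro k _ n hn
    exact hn.2.2

/-- Frolík's uniqueness: two hat-separated families with pointwise distinct members
cannot have the same `p`-limit. -/
lemma key_neq {p : StoneCech ℕ} (x y : ℕ → StoneCech ℕ) (C B : ℕ → Set ℕ)
    (hCd : ∀ k j, k ≠ j → C k ∩ C j = ∅)
    (hBd : ∀ n m, n ≠ m → B n ∩ B m = ∅)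
    (hCx : ∀ k, Uf (x k) (C k))
    (hBy : ∀ n, Uf (y n) (B n))
    (hxy : ∀ k n, x k ≠ y n) :
    stoneExt x p ≠ stoneExt y p := by
  classical
  intro hq
  set UC : Set ℕ := {j | ∃ k, j ∈ C k} with hUC
  set UB : Set ℕ := {j | ∃ n, j ∈ B n} with hUB
  have hxUC : Uf (stoneExt x p) UC := by
    apply Uf.limit (Uf_univ (x := p))
    intro k _
    exact (hCx k).mono (fun j hj => ⟨k, hj⟩)
  have hyUB : Uf (stoneExt y p) UB := by
    apply Uf.limit (Uf_univ (x := p))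
    intro n _
    exact (hBy n).mono (fun j hj => ⟨n, hj⟩)
  -- trichotomy for the `y`-family over the `C`-hats
  have hcover : Uf p {n | ∃ k, Uf (y n) (C k)} ∨
      (Uf p {n | ¬ Uf (y n) UC} ∨ Uf p {n | Uf (y n) UC ∧ ∀ k, ¬ Uf (y n) (C k)}) := by
    have h0 : (univ : Set ℕ) ⊆ {n | ∃ k, Uf (y n) (C k)} ∪
        ({n | ¬ Uf (y n) UC} ∪ {n | Uf (y n) UC ∧ ∀ k, ¬ Uf (y n) (C k)}) := by
      intro n _
      by_cases h1 : ∃ k, Uf (y n) (C k)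
      · exact Or.inl h1
      · push_neg at h1
        by_cases h2 : Uf (y n) UC
        · exact Or.inr (Or.inr ⟨h2, h1⟩)
        · exact Or.inr (Or.inl h2)
    rcases ((Uf_univ (x := p)).mono h0).union with h | h
    · exact Or.inl h
    · exact Or.inr h.union
  rcases hcover with hconc | hnull | hspread
  · exact conc_case x y C B hCd hBd hCx hBy hxy hq hconc
  · -- y-family escapes the C-hats entirely : contradiction
    have h2 : Uf (stoneExt y p) UCᶜ := by
      apply Uf.limit hnull
      intro n hn
      exact Uf.compl_of_not hn
    rw [hq] at hxUC
    exact hatS_disj (inter_compl_self UC) hxUC h2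
  · -- now the trichotomy for the `x`-family over the `B`-hats
    have hcover' : Uf p {k | ∃ n, Uf (x k) (B n)} ∨
        (Uf p {k | ¬ Uf (x k) UB} ∨ Uf p {k | Uf (x k) UB ∧ ∀ n, ¬ Uf (x k) (B n)}) := by
      have h0 : (univ : Set ℕ) ⊆ {k | ∃ n, Uf (x k) (B n)} ∪
          ({k | ¬ Uf (x k) UB} ∪ {k | Uf (x k) UB ∧ ∀ n, ¬ Uf (x k) (B n)}) := by
        intro k _
        by_cases h1 : ∃ n, Uf (x k) (B n)
        · exact Or.inl h1
        · push_neg at h1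
          by_cases h2 : Uf (x k) UB
          · exact Or.inr (Or.inr ⟨h2, h1⟩)
          · exact Or.inr (Or.inl h2)
      rcases ((Uf_univ (x := p)).mono h0).union with h | h
      · exact Or.inl h
      · exact Or.inr h.union
    rcases hcover' with hconc' | hnull' | hspread'
    · exact conc_case y x B C hBd hCd hBy hCx (fun n k => (hxy k n).symm) hq.symm hconc'
    · have h2 : Uf (stoneExt x p) UBᶜ := by
        apply Uf.limit hnull'
        intro k hk
        exact Uf.compl_of_not hk
      rw [hq] at h2
      exact hatS_disj (inter_compl_self UB) hyUB h2
    · -- spread/spread : the triangle argument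
      set V : Set ℕ := {j | ∃ n, j ∈ B n ∧ ∃ k, j ∈ C k ∧ n < k} with hV
      set V' : Set ℕ := {j | ∃ k, j ∈ C k ∧ ∃ n, j ∈ B n ∧ k < n} with hV'
      have hVV' : V ∩ V' = ∅ := by
        ext j
        simp only [mem_inter_iff, mem_empty_iff_false, iff_false, not_and]
        rintro ⟨n₀, hB₀, k₀, hC₀, h₀⟩ ⟨k₁, hC₁, n₁, hB₁, h₁⟩
        have hn : n₀ = n₁ := by
          by_contra hne
          have : j ∈ B n₀ ∩ B n₁ := ⟨hB₀, hB₁⟩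
          rw [hBd _ _ hne] at this
          exact this
        have hk : k₀ = k₁ := by
          by_contra hne
          have : j ∈ C k₀ ∩ C k₁ := ⟨hC₀, hC₁⟩
          rw [hCd _ _ hne] at this
          exact this
        omega
      have hVy : Uf (stoneExt y p) V := by
        apply Uf.limit hspread
        rintro n ⟨hUCn, hnok⟩
        have hfin : ¬ Uf (y n) (⋃ k ∈ Finset.range (n+1), C k) :=
          not_Uf_finUnion (fun k _ => hnok k)
        have h1 := ((hBy n).inter hUCn).inter (Uf.compl_of_not hfin)
        apply h1.mono
        rintro j ⟨⟨hjB, k, hjC⟩, hjbad⟩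
        refine ⟨n, hjB, k, hjC, ?_⟩
        by_contra hle
        apply hjbad
        simp only [mem_iUnion, Finset.mem_range]
        exact ⟨k, by omega, hjC⟩
      have hVx : Uf (stoneExt x p) V' := by
        apply Uf.limit hspread'
        rintro k ⟨hUBk, hnon⟩
        have hfin : ¬ Uf (x k) (⋃ n ∈ Finset.range (k+1), B n) :=
          not_Uf_finUnion (fun n _ => hnon n)
        have h1 := ((hCx k).inter hUBk).inter (Uf.compl_of_not hfin)
        apply h1.mono
        rintro j ⟨⟨hjC, n, hjB⟩, hjbad⟩
        refine ⟨k, hjC, n, hjB, ?_⟩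
        by_contra hle
        apply hjbad
        simp only [mem_iUnion, Finset.mem_range]
        exact ⟨n, by omega, hjB⟩
      rw [hq] at hVx
      exact hatS_disj hVV' hVy hVx

lemma stoneExt_mem_omegaStar {p : StoneCech ℕ} {f : ℕ → StoneCech ℕ}
    (hf : ∀ m, f m ∈ omegaStar) : stoneExt f p ∈ omegaStar := by
  rintro ⟨n, hn⟩
  exact stoneExt_notUnit hf n hn.symm

lemma pOp_subset_omegaStar {p : StoneCech ℕ} {X : Set (StoneCech ℕ)} (hX : X ⊆ omegaStar) :
    pOp p X ⊆ omegaStar := by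
  rintro z (hz | ⟨f, _, hfr, _, rfl⟩)
  · exact hX hz
  · exact stoneExt_mem_omegaStar (fun m => hX (hfr ⟨m, rfl⟩))

lemma pOp_omegaStar {p : StoneCech ℕ} : pOp p omegaStar = omegaStar :=
  Subset.antisymm (pOp_subset_omegaStar subset_rfl) subset_union_left

lemma pOp_mono {p : StoneCech ℕ} {X Y : Set (StoneCech ℕ)} (h : X ⊆ Y) : pOp p X ⊆ pOp p Y := by
  rintro z (hz | ⟨f, h1, h2, h3, h4⟩)
  · exact Or.inl (h hz)
  · exact Or.inr ⟨f, h1, subset_trans h2 h, h3, h4⟩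

/-- Frolík uniqueness in the form we need. -/
lemma limit_ne {p : StoneCech ℕ} (f g : ℕ → StoneCech ℕ)
    (hfi : Injective f) (hgi : Injective g)
    (hfd : DiscreteTopology (Set.range f)) (hgd : DiscreteTopology (Set.range g))
    (hdisj : ∀ k n, f k ≠ g n) : stoneExt f p ≠ stoneExt g p := by
  obtain ⟨Cf, hCfd, hCf⟩ := exists_disjoint_hats f hfi hfd
  obtain ⟨Cg, hCgd, hCg⟩ := exists_disjoint_hats g hgi hgd
  exact key_neq f g Cf Cg hCfd hCgd hCf hCg hdisj

/-- the operator `X ↦ X^p` preserves `𝒯(p)`-openness. -/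
lemma TpOpen_pOp {p : StoneCech ℕ} {X : Set (StoneCech ℕ)} (hX : TpOpen p X) :
    TpOpen p (pOp p X) := by
  obtain ⟨hX1, hX2⟩ := hX
  refine ⟨pOp_subset_omegaStar hX1, ?_⟩
  apply Subset.antisymm _ subset_union_left
  rintro z (hz | ⟨g, hgi, hgr, hgd, rfl⟩)
  · exact hz
  · have hgr' : ∀ n, g n ∈ omegaStar \ pOp p X := fun n => hgr ⟨n, rfl⟩
    have hzo : stoneExt g p ∈ omegaStar :=
      stoneExt_mem_omegaStar (fun m => (hgr' m).1)
    have hznX : stoneExt g p ∉ X := by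
      have h1 : Set.range g ⊆ omegaStar \ X := by
        rintro _ ⟨n, rfl⟩
        exact ⟨(hgr' n).1, fun h => (hgr' n).2 (Or.inl h)⟩
      have h2 : stoneExt g p ∈ pOp p (omegaStar \ X) :=
        Or.inr ⟨g, hgi, h1, hgd, rfl⟩
      rw [hX2] at h2
      exact h2.2
    refine ⟨hzo, ?_⟩
    rintro (hzX | ⟨f, hfi, hfr, hfd, hfz⟩)
    · exact hznX hzX
    · refine limit_ne f g hfi hgi hfd hgd ?_ (hfz.trans rfl)
      intro k n h
      exact (hgr' n).2 (Or.inl (h ▸ hfr ⟨k, rfl⟩))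

lemma subset_TpClosure {p : StoneCech ℕ} {X : Set (StoneCech ℕ)} : X ⊆ TpClosure p X :=
  fun z hz => fun C hC => hC.1 hz

lemma TpClosure_subset_omegaStar {p : StoneCech ℕ} {X : Set (StoneCech ℕ)}
    (hX : X ⊆ omegaStar) : TpClosure p X ⊆ omegaStar :=
  fun z hz => hz omegaStar ⟨hX, subset_rfl, pOp_omegaStar⟩

lemma pOp_TpClosure {p : StoneCech ℕ} {X : Set (StoneCech ℕ)} :
    pOp p (TpClosure p X) = TpClosure p X := by
  apply Subset.antisymm _ subset_union_left
  rintro z (hz | ⟨f, hfi, hfr, hfd, hfz⟩)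
  · exact hz
  · intro C hC
    have : stoneExt f p ∈ pOp p C :=
      Or.inr ⟨f, hfi, fun w hw => hfr hw C hC, hfd, rfl⟩
    rw [hC.2.2] at this
    exact hfz ▸ this

end TpAux

end TpAuxSection

/-- Corollary 5.8: the `𝒯(p)`-closure of every `𝒯(p)`-open set is `𝒯(p)`-open;
that is, `(ω*, 𝒯(p))` is extremally disconnected. -/
theorem TpOpen_TpClosure (p : StoneCech ℕ) (hp : p ∈ omegaStar) (X : Set (StoneCech ℕ))
    (hX : TpOpen p X) : TpOpen p (TpClosure p X) := by
  classical
  set S : Set (Set (StoneCech ℕ)) := {U | TpOpen p U ∧ X ⊆ U ∧ U ⊆ TpClosure p X} with hSdef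
  have hXS : X ∈ S := ⟨hX, subset_rfl, TpAux.subset_TpClosure⟩
  have hchain : ∀ c ⊆ S, IsChain (· ⊆ ·) c → c.Nonempty → ∃ ub ∈ S, ∀ s ∈ c, s ⊆ ub := by
    intro c hcS _ hne
    refine ⟨⋃₀ c, ⟨⟨?_, ?_⟩, ?_, ?_⟩, fun s hs => Set.subset_sUnion_of_mem hs⟩
    · rintro z ⟨U, hU, hz⟩
      exact (hcS hU).1.1 hz
    · apply Set.Subset.antisymm _ Set.subset_union_left
      rintro z (hz | ⟨g, hgi, hgr, hgd, rfl⟩)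
      · exact hz
      · constructor
        · exact TpAux.stoneExt_mem_omegaStar (fun m => (hgr ⟨m, rfl⟩).1)
        · rintro ⟨U, hUc, hzU⟩
          have h1 : Set.range g ⊆ omegaStar \ U :=
            fun w hw => ⟨(hgr hw).1, fun h => (hgr hw).2 ⟨U, hUc, h⟩⟩
          have h2 : stoneExt g p ∈ pOp p (omegaStar \ U) := Or.inr ⟨g, hgi, h1, hgd, rfl⟩
          rw [(hcS hUc).1.2] at h2
          exact h2.2 hzU
    · obtain ⟨U, hU⟩ := hne
      exact Set.Subset.trans (hcS hU).2.1 (Set.subset_sUnion_of_mem hU)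
    · rintro z ⟨U, hU, hz⟩
      exact (hcS hU).2.2 hz
  obtain ⟨M, hXM, hM⟩ := zorn_subset_nonempty S hchain X hXS
  have hMS : M ∈ S := hM.1
  have hMcl : pOp p M ⊆ TpClosure p X := by
    calc pOp p M ⊆ pOp p (TpClosure p X) := TpAux.pOp_mono hMS.2.2
      _ = TpClosure p X := TpAux.pOp_TpClosure
  have hMclosed : pOp p M = M := by
    have h1 : pOp p M ∈ S :=
      ⟨TpAux.TpOpen_pOp hMS.1, Set.Subset.trans hMS.2.1 Set.subset_union_left, hMcl⟩
    exact Set.Subset.antisymm (hM.2 h1 Set.subset_union_left) Set.subset_union_left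
  have hMfam : M ∈ {C | X ⊆ C ∧ C ⊆ omegaStar ∧ pOp p C = C} := ⟨hMS.2.1, hMS.1.1, hMclosed⟩
  have hClM : TpClosure p X = M :=
    Set.Subset.antisymm (fun z hz => hz M hMfam) hMS.2.2
  rw [hClM]
  exact hMS.1
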